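/- The Cauchy product × : (ℝ²)^ω → ℝ^ω, defined by (σ × τ)_k = Σ_{i=0}^k σ_i·τ_{k-i}, is causally differentiable at every (σ,τ), and its causal derivative is D×(σ,τ)(Δσ,Δτ) = Δσ × τ + σ × Δτ. -/

import Mathlib

/-- A stream function is *causal* if initial segments of length `k+1` of the
input determine initial segments of length `k+1` of the output. -/
def Causal {A B : Type*} (f : (ℕ → A) → (ℕ → B)) : Prop :=
  ∀ σ τ : ℕ → A, ∀ k : ℕ, (∀ i ≤ k, σ i = τ i) → ∀ i ≤ k, f σ i = f τ i

/-- Extend a finite word to a stream (padding with the first letter). -/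
def extW {A : Type*} {k : ℕ} (w : Fin (k+1) → A) : ℕ → A :=
  fun n => if h : n < k+1 then w ⟨n, h⟩ else w 0

/-- The `k`-th pointwise approximant (unrolling) of a causal function. -/
def U {A B : Type*} (f : (ℕ → A) → (ℕ → B)) (k : ℕ) (w : Fin (k+1) → A) : B :=
  f (extW w) k

/-- The `k`-th stringwise approximant (truncation) of a causal function. -/
def T {A B : Type*} (f : (ℕ → A) → (ℕ → B)) (k : ℕ) (w : Fin (k+1) → A) :
    Fin (k+1) → B := fun i => f (extW w) i

/-- The initial segment `σ_{0:k}` of a stream, as a finite word. -/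
def init {A : Type*} (σ : ℕ → A) (k : ℕ) : Fin (k+1) → A := fun i => σ i

/-- A causal function is differentiable at a stream `σ` when all of its
pointwise approximants are differentiable at `σ_{0:k}`. -/
def CausalDiffAt {E F : Type*} [NormedAddCommGroup E] [NormedSpace ℝ E]
    [NormedAddCommGroup F] [NormedSpace ℝ F]
    (f : (ℕ → E) → ℕ → F) (σ : ℕ → E) : Prop :=
  ∀ k, DifferentiableAt ℝ (U f k) (init σ k)

/-- `L` is the causal derivative of `f` at `σ`: the `k`-th pointwise
approximant of `L` is the Jacobian of `U_k(f)` at `σ_{0:k}`. -/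
def IsCausalDerivAt {E F : Type*} [NormedAddCommGroup E] [NormedSpace ℝ E]
    [NormedAddCommGroup F] [NormedSpace ℝ F]
    (f : (ℕ → E) → ℕ → F) (σ : ℕ → E) (L : (ℕ → E) → ℕ → F) : Prop :=
  ∀ (Δ : ℕ → E) (k : ℕ), L Δ k = fderiv ℝ (U f k) (init σ k) (init Δ k)

/-- The Cauchy product of two real streams. -/
def cauchy (σ τ : ℕ → ℝ) : ℕ → ℝ :=
  fun k => ∑ i ∈ Finset.range (k+1), σ i * τ (k - i)

/-- The constant stream `[r] = (r, 0, 0, ...)`. -/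
def streamConst (r : ℝ) : ℕ → ℝ := fun k => if k = 0 then r else 0

/-- The Cauchy product as a causal function `(ℝ²)^ω → ℝ^ω`. -/
def cprod (p : ℕ → ℝ × ℝ) : ℕ → ℝ :=
  fun k => ∑ i ∈ Finset.range (k+1), (p i).1 * (p (k - i)).2


noncomputable def Amap (k : ℕ) (i : Fin (k+1)) : (Fin (k+1) → ℝ × ℝ) →L[ℝ] ℝ :=
  (ContinuousLinearMap.fst ℝ ℝ ℝ).comp (ContinuousLinearMap.proj i)

noncomputable def Bmap (k : ℕ) (i : Fin (k+1)) : (Fin (k+1) → ℝ × ℝ) →L[ℝ] ℝ :=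
  (ContinuousLinearMap.snd ℝ ℝ ℝ).comp (ContinuousLinearMap.proj i)

lemma U_cprod_eq (k : ℕ) (w : Fin (k+1) → ℝ × ℝ) :
    U cprod k w = ∑ i : Fin (k+1), (w i).1 * (w i.rev).2 := by
  show cprod (extW w) k = _
  rw [cprod, Finset.sum_range]
  refine Finset.sum_congr rfl fun i _ => ?_
  have h1 : (i : ℕ) < k + 1 := i.isLt
  have h2 : k - (i : ℕ) < k + 1 := Nat.lt_succ_of_le (Nat.sub_le _ _)
  have h3 : (⟨k - (i:ℕ), h2⟩ : Fin (k+1)) = i.rev := Fin.ext (by simp [Fin.rev])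
  simp only [extW, h1, h2, dif_pos, h3, Fin.eta]

lemma hasFDeriv_U_cprod (k : ℕ) (w : Fin (k+1) → ℝ × ℝ) :
    HasFDerivAt (U cprod k)
      (∑ i : Fin (k+1), ((w i).1 • Bmap k i.rev + (w i.rev).2 • Amap k i)) w := by
  have he : U cprod k = fun w => ∑ i : Fin (k+1), (w i).1 * (w i.rev).2 := by
    funext w; exact U_cprod_eq k w
  rw [he]
  refine HasFDerivAt.fun_sum fun i _ => ?_
  have hA : HasFDerivAt (fun v : Fin (k+1) → ℝ × ℝ => (v i).1) (Amap k i) w :=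
    (Amap k i).hasFDerivAt
  have hB : HasFDerivAt (fun v : Fin (k+1) → ℝ × ℝ => (v i.rev).2) (Bmap k i.rev) w :=
    (Bmap k i.rev).hasFDerivAt
  exact hA.mul hB

/-- Derivative of the Cauchy product:
`D×(σ,τ)(Δσ,Δτ) = Δσ × τ + σ × Δτ`. -/
theorem cauchy_product_deriv (p : ℕ → ℝ × ℝ) :
    CausalDiffAt cprod p ∧
    IsCausalDerivAt cprod p (fun Δ =>
      cauchy (fun i => (Δ i).1) (fun i => (p i).2) +
      cauchy (fun i => (p i).1) (fun i => (Δ i).2)) := by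
  constructor
  · intro k
    exact (hasFDeriv_U_cprod k (init p k)).differentiableAt
  · intro Δ k
    rw [(hasFDeriv_U_cprod k (init p k)).fderiv]
    simp only [ContinuousLinearMap.sum_apply, ContinuousLinearMap.add_apply,
      ContinuousLinearMap.smul_apply, Amap, Bmap, ContinuousLinearMap.comp_apply,
      ContinuousLinearMap.proj_apply, ContinuousLinearMap.coe_fst',
      ContinuousLinearMap.coe_snd', smul_eq_mul]
    rw [Pi.add_apply, cauchy, cauchy, Finset.sum_range, Finset.sum_range,
      ← Finset.sum_add_distrib]
    refine Finset.sum_congr rfl fun i _ => ?_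
    have hrev : ((i.rev : Fin (k+1)) : ℕ) = k - (i : ℕ) := by simp [Fin.rev]
    simp only [init, hrev]
    ring
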